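/- Let A be a proper symmetric 3×3 advantage matrix with a₁₂ = a₂₁ = a, a₁₃ = a₃₁ = b, a₂₃ = a₃₂ = c, where a, b, c > 0, and let F : S₃ → S₃ be the associated Variational Learning dynamics. Then the interior fixed point p = (c/(a+b+c), b/(a+b+c), a/(a+b+c)) is asymptotically stable: there exists a relative neighbourhood U of p in S₃ such that for every q ∈ U the iterates Fⁿ(q) converge to p as n → ∞. Consequently, every proper symmetric three-grammar system admits a state of stable variation. -/

import Mathlib

open Finset Filter Topology

/-- The simplex `S₃` of probability vectors over three grammars. -/
def simplex3 : Set (Fin 3 → ℝ) :=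
  {p | (∀ i, 0 ≤ p i) ∧ ∑ i, p i = 1}

/-- The penalty probability `c_i(p) = ∑_{j ≠ i} a_{ij} p_j`. -/
def penalty (A : Matrix (Fin 3) (Fin 3) ℝ) (p : Fin 3 → ℝ) (i : Fin 3) : ℝ :=
  ∑ j ∈ Finset.univ.filter (fun j => j ≠ i), A i j * p j

/-- The Variational Learning dynamics
`F_i(p) = ∏_{j ≠ i} c_j(p) / ∑_m ∏_{k ≠ m} c_k(p)`. -/
noncomputable def VLdyn (A : Matrix (Fin 3) (Fin 3) ℝ) (p : Fin 3 → ℝ) (i : Fin 3) : ℝ :=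
  (∏ j ∈ Finset.univ.filter (fun j => j ≠ i), penalty A p j) /
    (∑ m, ∏ k ∈ Finset.univ.filter (fun k => k ≠ m), penalty A p k)

/-- The vertex `v_i` of the simplex, i.e. the state of total dominance of grammar `G_i`. -/
def vertex (i : Fin 3) : Fin 3 → ℝ := fun j => if j = i then 1 else 0


noncomputable def Haux (w : Fin 3 → ℝ) : Fin 3 → ℝ :=
  fun i => (1 - w i)⁻¹ / (∑ j, (1 - w j)⁻¹)

def Daux : Set (Fin 3 → ℝ) :=
  {w | (∑ i, w i) = 1 ∧ ∀ i j, |w i - w j| ≤ 1/8}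

lemma Daux_bounds {w : Fin 3 → ℝ} (hw : w ∈ Daux) : ∀ i, 1/4 ≤ w i ∧ w i ≤ 5/12 := by
  obtain ⟨hs, hd⟩ := hw
  rw [Fin.sum_univ_three] at hs
  have h01 := abs_le.mp (hd 0 1)
  have h02 := abs_le.mp (hd 0 2)
  have h12 := abs_le.mp (hd 1 2)
  intro i
  fin_cases i <;> exact ⟨by simp; linarith, by simp; linarith⟩

lemma Haux_S_pos {w : Fin 3 → ℝ} (h : ∀ i, w i ≤ 5/12) : 0 < ∑ j, (1 - w j)⁻¹ := by
  rw [Fin.sum_univ_three]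
  have i0 : (0:ℝ) < (1 - w 0)⁻¹ := by rw [inv_pos]; linarith [h 0]
  have i1 : (0:ℝ) < (1 - w 1)⁻¹ := by rw [inv_pos]; linarith [h 1]
  have i2 : (0:ℝ) < (1 - w 2)⁻¹ := by rw [inv_pos]; linarith [h 2]
  linarith

lemma Haux_sum {w : Fin 3 → ℝ} (h : ∀ i, w i ≤ 5/12) : ∑ i, Haux w i = 1 := by
  have hS := Haux_S_pos h
  simp only [Haux]
  rw [← Finset.sum_div, div_self hS.ne']

lemma Haux_contract {w : Fin 3 → ℝ} (hw : w ∈ Daux) (i j : Fin 3) :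
    |Haux w i - Haux w j| ≤ 36/49 * |w i - w j| := by
  have hb := Daux_bounds hw
  have hbi := hb i; have hbj := hb j
  have hS := Haux_S_pos (fun k => (hb k).2)
  have hui : (0:ℝ) < 1 - w i := by linarith [hbi.2]
  have huj : (0:ℝ) < 1 - w j := by linarith [hbj.2]
  set S := ∑ k : Fin 3, (1 - w k)⁻¹ with hSdef
  have hid : Haux w i - Haux w j
      = (w i - w j) * ((1 - w i)⁻¹ * (1 - w j)⁻¹ * S⁻¹) := by
    have e1 : Haux w i = (1 - w i)⁻¹ / S := rfl
    have e2 : Haux w j = (1 - w j)⁻¹ / S := rfl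
    rw [e1, e2]
    field_simp
    ring
  rw [hid, abs_mul]
  have hS4 : (4:ℝ) ≤ ∑ k, (1 - w k)⁻¹ := by
    rw [Fin.sum_univ_three]
    have e0 : (4:ℝ)/3 ≤ (1 - w 0)⁻¹ := by
      rw [le_inv_comm₀ (by norm_num) (by linarith [(hb 0).2])]; linarith [(hb 0).1]
    have e1 : (4:ℝ)/3 ≤ (1 - w 1)⁻¹ := by
      rw [le_inv_comm₀ (by norm_num) (by linarith [(hb 1).2])]; linarith [(hb 1).1]
    have e2 : (4:ℝ)/3 ≤ (1 - w 2)⁻¹ := by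
      rw [le_inv_comm₀ (by norm_num) (by linarith [(hb 2).2])]; linarith [(hb 2).1]
    linarith
  have hfac : (1 - w i)⁻¹ * (1 - w j)⁻¹ * (∑ k, (1 - w k)⁻¹)⁻¹ ≤ 36/49 := by
    rw [← mul_inv, ← mul_inv]
    rw [inv_le_comm₀ (by positivity) (by norm_num)]
    have p1 : (49:ℝ)/144 ≤ (1 - w i) * (1 - w j) := by nlinarith [hbi.2, hbj.2]
    have p2 := mul_le_mul p1 hS4 (by norm_num) (by positivity)
    linarith
  have hfacpos : (0:ℝ) < (1 - w i)⁻¹ * (1 - w j)⁻¹ * S⁻¹ := by positivity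
  rw [abs_of_pos hfacpos]
  calc |w i - w j| * ((1 - w i)⁻¹ * (1 - w j)⁻¹ * S⁻¹)
      ≤ |w i - w j| * (36/49) := by gcongr
    _ = 36/49 * |w i - w j| := by ring

lemma Haux_mem {w : Fin 3 → ℝ} (hw : w ∈ Daux) : Haux w ∈ Daux := by
  refine ⟨Haux_sum (fun i => (Daux_bounds hw i).2), fun i j => ?_⟩
  have h1 := Haux_contract hw i j
  have h2 := hw.2 i j
  have h3 := abs_nonneg (w i - w j)
  nlinarith

lemma iter_mem {w : Fin 3 → ℝ} (hw : w ∈ Daux) (n : ℕ) : Haux^[n] w ∈ Daux := by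
  induction n with
  | zero => exact hw
  | succ n ih => rw [Function.iterate_succ_apply']; exact Haux_mem ih

lemma iter_contract {w : Fin 3 → ℝ} (hw : w ∈ Daux) (n : ℕ) (i j : Fin 3) :
    |Haux^[n] w i - Haux^[n] w j| ≤ (36/49)^n * (1/8) := by
  induction n with
  | zero => simpa using hw.2 i j
  | succ n ih =>
      rw [Function.iterate_succ_apply']
      calc |Haux (Haux^[n] w) i - Haux (Haux^[n] w) j|
          ≤ 36/49 * |Haux^[n] w i - Haux^[n] w j| := Haux_contract (iter_mem hw n) i j
        _ ≤ 36/49 * ((36/49)^n * (1/8)) := by linarith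
        _ = (36/49)^(n+1) * (1/8) := by ring

lemma iter_tendsto {w : Fin 3 → ℝ} (hw : w ∈ Daux) :
    Tendsto (fun n => Haux^[n] w) atTop (𝓝 (fun _ => (1:ℝ)/3)) := by
  rw [tendsto_pi_nhds]
  intro i
  rw [← tendsto_sub_nhds_zero_iff]
  have hb : Tendsto (fun n : ℕ => ((36:ℝ)/49)^n * (1/8)) atTop (𝓝 0) := by
    simpa using (tendsto_pow_atTop_nhds_zero_of_lt_one (by norm_num) (by norm_num)).mul_const ((1:ℝ)/8)
  refine squeeze_zero_norm (fun n => ?_) hb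
  have hs := (iter_mem hw n).1
  rw [Fin.sum_univ_three] at hs
  have e0 := abs_le.mp (iter_contract hw n i 0)
  have e1 := abs_le.mp (iter_contract hw n i 1)
  have e2 := abs_le.mp (iter_contract hw n i 2)
  rw [Real.norm_eq_abs, abs_le]
  constructor <;> [skip; skip] <;> fin_cases i <;> simp at e0 e1 e2 ⊢ <;> linarith

noncomputable def Psiaux (a b c : ℝ) (w : Fin 3 → ℝ) : Fin 3 → ℝ :=
  fun i => (w i / ![a*b, a*c, b*c] i) / (∑ j, w j / ![a*b, a*c, b*c] j)

lemma filter_ne0 : (Finset.univ.filter (fun j : Fin 3 => j ≠ 0)) = {1, 2} := by decide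
lemma filter_ne1 : (Finset.univ.filter (fun j : Fin 3 => j ≠ 1)) = {0, 2} := by decide
lemma filter_ne2 : (Finset.univ.filter (fun j : Fin 3 => j ≠ 2)) = {0, 1} := by decide

lemma penalty_exp (a b c : ℝ) (A : Matrix (Fin 3) (Fin 3) ℝ)
    (hA : A = !![0, a, b; a, 0, c; b, c, 0]) (q : Fin 3 → ℝ) :
    penalty A q 0 = a * q 1 + b * q 2 ∧ penalty A q 1 = a * q 0 + c * q 2 ∧
      penalty A q 2 = b * q 0 + c * q 1 := by
  refine ⟨?_, ?_, ?_⟩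
  · rw [penalty, filter_ne0, Finset.sum_pair (by decide), hA]; norm_num [Matrix.cons_val_two, Matrix.tail_cons, Matrix.head_cons]
  · rw [penalty, filter_ne1, Finset.sum_pair (by decide), hA]; norm_num [Matrix.cons_val_two, Matrix.tail_cons, Matrix.head_cons]
  · rw [penalty, filter_ne2, Finset.sum_pair (by decide), hA]; norm_num [Matrix.cons_val_two, Matrix.tail_cons, Matrix.head_cons]

lemma VLdyn_exp (A : Matrix (Fin 3) (Fin 3) ℝ) (q : Fin 3 → ℝ) (i : Fin 3) :
    VLdyn A q i = (∏ j ∈ Finset.univ.filter (fun j => j ≠ i), penalty A q j) /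
      (penalty A q 1 * penalty A q 2 + penalty A q 0 * penalty A q 2
        + penalty A q 0 * penalty A q 1) := by
  rw [VLdyn, Fin.sum_univ_three, filter_ne0, filter_ne1, filter_ne2,
    Finset.prod_pair (by decide), Finset.prod_pair (by decide), Finset.prod_pair (by decide)]

set_option maxHeartbeats 1000000 in
lemma conj (a b c : ℝ) (ha : 0 < a) (hb : 0 < b) (hc : 0 < c)
    (A : Matrix (Fin 3) (Fin 3) ℝ) (hA : A = !![0, a, b; a, 0, c; b, c, 0])
    {w : Fin 3 → ℝ} (hsum : ∑ i, w i = 1)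
    (hlb : ∀ i, 1/4 ≤ w i) (hub : ∀ i, w i ≤ 5/12) :
    VLdyn A (Psiaux a b c w) = Psiaux a b c (Haux w) := by
  have hw0 : 0 < w 0 := lt_of_lt_of_le (by norm_num) (hlb 0)
  have hw1 : 0 < w 1 := lt_of_lt_of_le (by norm_num) (hlb 1)
  have hw2 : 0 < w 2 := lt_of_lt_of_le (by norm_num) (hlb 2)
  rw [Fin.sum_univ_three] at hsum
  set q := Psiaux a b c w with hqdef
  set Z : ℝ := w 0/(a*b) + w 1/(a*c) + w 2/(b*c) with hZdef
  have hZ : 0 < Z := by positivity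
  have hq0 : q 0 = (w 0/(a*b))/Z := by
    rw [hqdef, Psiaux]; simp only [Fin.sum_univ_three]; norm_num [Matrix.cons_val_two, Matrix.tail_cons, Matrix.head_cons]; rfl
  have hq1 : q 1 = (w 1/(a*c))/Z := by
    rw [hqdef, Psiaux]; simp only [Fin.sum_univ_three]; norm_num [Matrix.cons_val_two, Matrix.tail_cons, Matrix.head_cons]; rfl
  have hq2 : q 2 = (w 2/(b*c))/Z := by
    rw [hqdef, Psiaux]; simp only [Fin.sum_univ_three]; norm_num [Matrix.cons_val_two, Matrix.tail_cons, Matrix.head_cons]; rfl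
  obtain ⟨hp0, hp1, hp2⟩ := penalty_exp a b c A hA q
  rw [hq1, hq2] at hp0
  rw [hq0, hq2] at hp1
  rw [hq0, hq1] at hp2
  have hp0' : penalty A q 0 = (w 1 + w 2)/(c*Z) := by
    rw [hp0]; field_simp
  have hp1' : penalty A q 1 = (w 0 + w 2)/(b*Z) := by
    rw [hp1]; field_simp
  have hp2' : penalty A q 2 = (w 0 + w 1)/(a*Z) := by
    rw [hp2]; field_simp
  set S : ℝ := ∑ k : Fin 3, (1 - w k)⁻¹ with hSdef
  have hS' : S = (w 1 + w 2)⁻¹ + (w 0 + w 2)⁻¹ + (w 0 + w 1)⁻¹ := by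
    rw [hSdef, Fin.sum_univ_three,
      show (1:ℝ) - w 0 = w 1 + w 2 by linarith,
      show (1:ℝ) - w 1 = w 0 + w 2 by linarith,
      show (1:ℝ) - w 2 = w 0 + w 1 by linarith]
  have hH0 : Haux w 0 = (w 1 + w 2)⁻¹ / S := by
    show (1 - w 0)⁻¹ / S = _
    rw [show (1:ℝ) - w 0 = w 1 + w 2 by linarith]
  have hH1 : Haux w 1 = (w 0 + w 2)⁻¹ / S := by
    show (1 - w 1)⁻¹ / S = _
    rw [show (1:ℝ) - w 1 = w 0 + w 2 by linarith]
  have hH2 : Haux w 2 = (w 0 + w 1)⁻¹ / S := by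
    show (1 - w 2)⁻¹ / S = _
    rw [show (1:ℝ) - w 2 = w 0 + w 1 by linarith]
  have hu0 : (0:ℝ) < w 1 + w 2 := by linarith
  have hu1 : (0:ℝ) < w 0 + w 2 := by linarith
  have hu2 : (0:ℝ) < w 0 + w 1 := by linarith
  have hSpos : 0 < S := by rw [hS']; positivity
  have hrden : Psiaux a b c (Haux w) = fun i => (Haux w i / ![a*b, a*c, b*c] i) /
      ((w 1 + w 2)⁻¹/S/(a*b) + (w 0 + w 2)⁻¹/S/(a*c) + (w 0 + w 1)⁻¹/S/(b*c)) := by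
    funext i
    rw [Psiaux]
    simp only [Fin.sum_univ_three]
    rw [hH0, hH1, hH2]
    norm_num [Matrix.cons_val_two, Matrix.tail_cons, Matrix.head_cons]
  have hden1 : 0 < (w 0 + w 2)/(b*Z) * ((w 0 + w 1)/(a*Z)) + (w 1 + w 2)/(c*Z) * ((w 0 + w 1)/(a*Z))
      + (w 1 + w 2)/(c*Z) * ((w 0 + w 2)/(b*Z)) := by positivity
  have hden2 : 0 < (w 1 + w 2)⁻¹/S/(a*b) + (w 0 + w 2)⁻¹/S/(a*c) + (w 0 + w 1)⁻¹/S/(b*c) := by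
    positivity
  clear_value Z S q
  have key0 : VLdyn A q 0 = Psiaux a b c (Haux w) 0 := by
    rw [VLdyn_exp, hrden, filter_ne0, Finset.prod_pair (by decide), hp0', hp1', hp2']
    simp only [Matrix.cons_val_zero]
    rw [hH0, div_eq_div_iff hden1.ne' hden2.ne', hS']
    field_simp
  have key1 : VLdyn A q 1 = Psiaux a b c (Haux w) 1 := by
    rw [VLdyn_exp, hrden, filter_ne1, Finset.prod_pair (by decide), hp0', hp1', hp2']
    simp only [Matrix.cons_val_one, Matrix.head_cons, Matrix.cons_val_zero]
    rw [hH1, div_eq_div_iff hden1.ne' hden2.ne', hS']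
    field_simp
  have key2 : VLdyn A q 2 = Psiaux a b c (Haux w) 2 := by
    rw [VLdyn_exp, hrden, filter_ne2, Finset.prod_pair (by decide), hp0', hp1', hp2']
    simp only [Matrix.cons_val_two, Matrix.tail_cons, Matrix.head_cons]
    rw [hH2, div_eq_div_iff hden1.ne' hden2.ne', hS']
    field_simp
  funext i
  fin_cases i
  · exact key0
  · exact key1
  · exact key2

noncomputable def Phiaux (a b c : ℝ) (q : Fin 3 → ℝ) : Fin 3 → ℝ :=
  fun i => (![a*b, a*c, b*c] i * q i) / (a*b*q 0 + a*c*q 1 + b*c*q 2)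

lemma Psiaux_center (a b c : ℝ) (ha : 0 < a) (hb : 0 < b) (hc : 0 < c) :
    Psiaux a b c (fun _ => (1:ℝ)/3) = ![c/(a+b+c), b/(a+b+c), a/(a+b+c)] := by
  have hd : (0:ℝ) < (1/3)/(a*b) + (1/3)/(a*c) + (1/3)/(b*c) := by positivity
  have hsum : (∑ j : Fin 3, ((fun _ => (1:ℝ)/3) j) / ![a*b, a*c, b*c] j)
      = (1/3)/(a*b) + (1/3)/(a*c) + (1/3)/(b*c) := by
    rw [Fin.sum_univ_three]; norm_num [Matrix.cons_val_two, Matrix.tail_cons, Matrix.head_cons]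
  funext i
  fin_cases i
  · show ((1:ℝ)/3) / (a*b) / _ = _
    rw [hsum]
    show _ = c/(a+b+c)
    rw [div_eq_div_iff hd.ne' (by positivity : (0:ℝ) < a+b+c).ne']
    field_simp
    ring
  · show ((1:ℝ)/3) / (a*c) / _ = _
    rw [hsum]
    show _ = b/(a+b+c)
    rw [div_eq_div_iff hd.ne' (by positivity : (0:ℝ) < a+b+c).ne']
    field_simp
    ring
  · show ((1:ℝ)/3) / (b*c) / _ = _
    rw [hsum]
    show _ = a/(a+b+c)
    rw [div_eq_div_iff hd.ne' (by positivity : (0:ℝ) < a+b+c).ne']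
    field_simp
    ring

lemma Haux_center : Haux (fun _ => (1:ℝ)/3) = fun _ => (1:ℝ)/3 := by
  funext i
  show (1 - (1:ℝ)/3)⁻¹ / (∑ _j : Fin 3, (1 - (1:ℝ)/3)⁻¹) = 1/3
  rw [Fin.sum_univ_three]
  norm_num

lemma PsiPhi (a b c : ℝ) (ha : 0 < a) (hb : 0 < b) (hc : 0 < c)
    {q : Fin 3 → ℝ} (hsum : q 0 + q 1 + q 2 = 1)
    (hs : 0 < a*b*q 0 + a*c*q 1 + b*c*q 2) :
    Psiaux a b c (Phiaux a b c q) = q := by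
  set s : ℝ := a*b*q 0 + a*c*q 1 + b*c*q 2 with hsdef
  have h0 : Phiaux a b c q 0 = (a*b*q 0)/s := by
    show (![a*b, a*c, b*c] 0 * q 0) / s = _
    norm_num
  have h1 : Phiaux a b c q 1 = (a*c*q 1)/s := by
    show (![a*b, a*c, b*c] 1 * q 1) / s = _
    norm_num
  have h2 : Phiaux a b c q 2 = (b*c*q 2)/s := by
    show (![a*b, a*c, b*c] 2 * q 2) / s = _
    norm_num [Matrix.cons_val_two, Matrix.tail_cons, Matrix.head_cons]
  have e0 : Phiaux a b c q 0 / (a*b) = q 0 / s := by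
    rw [h0]; field_simp
  have e1 : Phiaux a b c q 1 / (a*c) = q 1 / s := by
    rw [h1]; field_simp
  have e2 : Phiaux a b c q 2 / (b*c) = q 2 / s := by
    rw [h2]; field_simp
  have hden : (∑ j : Fin 3, Phiaux a b c q j / ![a*b, a*c, b*c] j) = s⁻¹ := by
    rw [Fin.sum_univ_three]
    simp only [Matrix.cons_val_zero, Matrix.cons_val_one, Matrix.head_cons,
      Matrix.cons_val_two, Matrix.tail_cons]
    rw [e0, e1, e2, ← add_div, ← add_div, hsum]
    exact one_div s
  funext i
  fin_cases i
  · show Phiaux a b c q 0 / (a*b) / _ = q 0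
    rw [hden, e0]; field_simp
  · show Phiaux a b c q 1 / (a*c) / _ = q 1
    rw [hden, e1]; field_simp
  · show Phiaux a b c q 2 / (b*c) / _ = q 2
    rw [hden, e2]; field_simp

lemma Psiaux_contAt (a b c : ℝ) (ha : 0 < a) (hb : 0 < b) (hc : 0 < c) :
    ContinuousAt (Psiaux a b c) (fun _ => (1:ℝ)/3) := by
  have hden : (∑ j : Fin 3, ((fun _ => (1:ℝ)/3) j) / ![a*b, a*c, b*c] j) ≠ 0 := by
    rw [Fin.sum_univ_three]
    simp only [Matrix.cons_val_zero, Matrix.cons_val_one, Matrix.head_cons,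
      Matrix.cons_val_two, Matrix.tail_cons]
    positivity
  have hsc : Continuous (fun w : Fin 3 → ℝ => ∑ j : Fin 3, w j / ![a*b, a*c, b*c] j) :=
    continuous_finset_sum _ (fun j _ => (continuous_apply j).div_const _)
  rw [continuousAt_pi]
  intro i
  exact (((continuous_apply i).div_const _).continuousAt).div hsc.continuousAt hden

theorem stmt_14 (a b c : ℝ) (ha : 0 < a) (hb : 0 < b) (hc : 0 < c)
    (A : Matrix (Fin 3) (Fin 3) ℝ)
    (hA : A = !![0, a, b; a, 0, c; b, c, 0]) :
    VLdyn A ![c/(a+b+c), b/(a+b+c), a/(a+b+c)] = ![c/(a+b+c), b/(a+b+c), a/(a+b+c)] ∧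
    (∃ U ∈ 𝓝[simplex3] (![c/(a+b+c), b/(a+b+c), a/(a+b+c)] : Fin 3 → ℝ), ∀ q ∈ U,
      Tendsto (fun n => (VLdyn A)^[n] q) atTop
        (𝓝 ![c/(a+b+c), b/(a+b+c), a/(a+b+c)])) ∧
    (∀ i, (![c/(a+b+c), b/(a+b+c), a/(a+b+c)] : Fin 3 → ℝ) i < 1) := by
  have hs : (0:ℝ) < a + b + c := by linarith
  set p : Fin 3 → ℝ := ![c/(a+b+c), b/(a+b+c), a/(a+b+c)] with hpdef
  have hcsum : ∑ i : Fin 3, ((fun _ => (1:ℝ)/3) i) = 1 := by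
    rw [Fin.sum_univ_three]; norm_num
  have hclb : ∀ i : Fin 3, (1:ℝ)/4 ≤ (fun _ => (1:ℝ)/3) i := fun _ => by norm_num
  have hcub : ∀ i : Fin 3, ((fun _ => (1:ℝ)/3) i : ℝ) ≤ 5/12 := fun _ => by norm_num
  have hPc : Psiaux a b c (fun _ => (1:ℝ)/3) = p := Psiaux_center a b c ha hb hc
  have hfix : VLdyn A p = p := by
    rw [← hPc, conj a b c ha hb hc A hA hcsum hclb hcub, Haux_center]
  refine ⟨hfix, ?_, ?_⟩
  · -- stability part
    set mv : Fin 3 → ℝ := ![a*b, a*c, b*c] with hmv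
    set sf : (Fin 3 → ℝ) → ℝ := fun q => a*b*q 0 + a*c*q 1 + b*c*q 2 with hsf
    have hscont : Continuous sf := by
      rw [hsf]; fun_prop
    set O : Set (Fin 3 → ℝ) :=
      {q | 0 < sf q} ∩ ⋂ i, ⋂ j, {q | |mv i * q i - mv j * q j| < sf q / 8} with hO
    have hOopen : IsOpen O := by
      refine (isOpen_lt continuous_const hscont).inter ?_
      refine isOpen_iInter_of_finite fun i => isOpen_iInter_of_finite fun j => ?_
      exact isOpen_lt (((continuous_const.mul (continuous_apply i)).sub
        (continuous_const.mul (continuous_apply j))).abs) (hscont.div_const 8)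
    have hval : ∀ i : Fin 3, mv i * p i = a*b*c/(a+b+c) := by
      intro i
      fin_cases i
      · show a*b * (c/(a+b+c)) = _ ; ring
      · show a*c * (b/(a+b+c)) = _ ; ring
      · show b*c * (a/(a+b+c)) = _ ; ring
    have hsfp : 0 < sf p := by
      show 0 < a*b*(c/(a+b+c)) + a*c*(b/(a+b+c)) + b*c*(a/(a+b+c))
      positivity
    have hpO : p ∈ O := by
      refine ⟨hsfp, ?_⟩
      simp only [Set.mem_iInter, Set.mem_setOf_eq]
      intro i j
      rw [hval i, hval j, sub_self, abs_zero]
      positivity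
    refine ⟨O ∩ simplex3, inter_mem (mem_nhdsWithin_of_mem_nhds (hOopen.mem_nhds hpO))
      self_mem_nhdsWithin, ?_⟩
    rintro q ⟨⟨hsq, hdq⟩, hqpos, hqsum⟩
    rw [Fin.sum_univ_three] at hqsum
    simp only [Set.mem_iInter, Set.mem_setOf_eq] at hdq hsq
    set w : Fin 3 → ℝ := Phiaux a b c q with hwdef
    have hwq : ∀ i, w i = mv i * q i / sf q := fun i => rfl
    have hwsum : ∑ i, w i = 1 := by
      rw [Fin.sum_univ_three, hwq 0, hwq 1, hwq 2, ← add_div, ← add_div]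
      rw [show mv 0 * q 0 + mv 1 * q 1 + mv 2 * q 2 = sf q from by
        show (a*b) * q 0 + (a*c) * q 1 + (b*c) * q 2 = _ ; rw [hsf]]
      exact div_self hsq.ne'
    have hwdiff : ∀ i j : Fin 3, |w i - w j| ≤ 1/8 := by
      intro i j
      rw [hwq i, hwq j, div_sub_div_same, abs_div, abs_of_pos hsq, div_le_iff₀ hsq]
      have := hdq i j
      linarith
    have hwD : w ∈ Daux := ⟨hwsum, hwdiff⟩
    have hPsi_w : Psiaux a b c w = q := PsiPhi a b c ha hb hc hqsum hsq
    have hiter : ∀ n : ℕ, (VLdyn A)^[n] q = Psiaux a b c (Haux^[n] w) := by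
      intro n
      induction n with
      | zero => simpa using hPsi_w.symm
      | succ n ih =>
          rw [Function.iterate_succ_apply', ih, Function.iterate_succ_apply',
            conj a b c ha hb hc A hA (iter_mem hwD n).1
              (fun i => (Daux_bounds (iter_mem hwD n) i).1)
              (fun i => (Daux_bounds (iter_mem hwD n) i).2)]
    have hT := (Psiaux_contAt a b c ha hb hc).tendsto.comp (iter_tendsto hwD)
    rw [hPc] at hT
    simp only [hiter]
    exact hT
  · intro i
    fin_cases i
    · show c/(a+b+c) < 1
      rw [div_lt_one hs]; linarith
    · show b/(a+b+c) < 1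
      rw [div_lt_one hs]; linarith
    · show a/(a+b+c) < 1
      rw [div_lt_one hs]; linarith
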